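/- If f belongs to 𝓛(F)_ℂ, then so does the function x ↦ |f(x)|. -/

import Mathlib

noncomputable section

open MeasureTheory

/-- A field `F` with a split valuation `ν : F^× → Γ` (split by `t`), with residue field `k`,
residue map `ρ : O_F → k`, where `Γ` has a minimal positive element `one`. -/
structure LiftSetup (Γ F k : Type*) [AddCommGroup Γ] [LinearOrder Γ] [IsOrderedAddMonoid Γ] [Field F] [Field k] where
  /-- the valuation (recorded on nonzero elements) -/
  ν : F → Γ
  /-- the splitting homomorphism `t : Γ → F^×` -/
  t : Γ → F
  /-- the residue map (recorded on the valuation ring) -/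
  ρ : F → k
  /-- the minimal positive element of `Γ` -/
  one : Γ
  one_pos : 0 < one
  one_min : ∀ γ : Γ, 0 < γ → one ≤ γ
  ν_mul : ∀ x y : F, x ≠ 0 → y ≠ 0 → ν (x * y) = ν x + ν y
  ν_add : ∀ x y : F, x ≠ 0 → y ≠ 0 → x + y ≠ 0 → min (ν x) (ν y) ≤ ν (x + y)
  t_ne : ∀ γ : Γ, t γ ≠ 0
  t_add : ∀ γ δ : Γ, t (γ + δ) = t γ * t δ
  ν_t : ∀ γ : Γ, ν (t γ) = γ
  ρ_add : ∀ x y : F, (x = 0 ∨ 0 ≤ ν x) → (y = 0 ∨ 0 ≤ ν y) → ρ (x + y) = ρ x + ρ y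
  ρ_mul : ∀ x y : F, (x = 0 ∨ 0 ≤ ν x) → (y = 0 ∨ 0 ≤ ν y) → ρ (x * y) = ρ x * ρ y
  ρ_one : ρ 1 = 1
  ρ_surj : ∀ u : k, ∃ x : F, (x = 0 ∨ 0 ≤ ν x) ∧ ρ x = u
  ρ_eq_zero : ∀ x : F, (x = 0 ∨ 0 ≤ ν x) → (ρ x = 0 ↔ (x = 0 ∨ 0 < ν x))

namespace LiftSetup

variable {Γ F k : Type*} [AddCommGroup Γ] [LinearOrder Γ] [IsOrderedAddMonoid Γ] [Field F] [Field k]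
variable (S : LiftSetup Γ F k)

/-- The ring of integers `O_F` of the valuation. -/
def integers : Set F := {x | x = 0 ∨ 0 ≤ S.ν x}

/-- The translated fractional ideal `a + t(γ)O_F`. -/
def fracIdeal (a : F) (γ : Γ) : Set F := {x | (x - a) * S.t (-γ) ∈ S.integers}

/-- The lift `f^{a,γ}` of a function `f` on the residue field `k`:
`f^{a,γ}(x) = f(ρ((x-a)t(-γ)))` for `x ∈ a + t(γ)O_F` and `0` otherwise. -/
def lift {A : Type*} [Zero A] (f : k → A) (a : F) (γ : Γ) : F → A :=
  (S.fracIdeal a γ).indicator fun x => f (S.ρ ((x - a) * S.t (-γ)))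

/-- The homomorphism `η : F^× → k^×`, `x ↦ ρ(x t(-ν x))`. -/
def η (x : F) : k := S.ρ (x * S.t (-S.ν x))

end LiftSetup

section Helpers
variable {Γ F k : Type*} [AddCommGroup Γ] [LinearOrder Γ] [IsOrderedAddMonoid Γ] [Field F] [Field k]
variable (S : LiftSetup Γ F k)

namespace LiftSetup

lemma nu_one : S.ν 1 = 0 := by
  have h := S.ν_mul 1 1 one_ne_zero one_ne_zero
  rw [mul_one] at h
  exact (add_eq_left.mp h.symm)

lemma nu_neg_one : S.ν (-1) = 0 := by
  have h := S.ν_mul (-1) (-1) (by norm_num) (by norm_num)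
  rw [neg_mul_neg, one_mul, nu_one] at h
  rcases lt_trichotomy (S.ν (-1)) 0 with h1 | h1 | h1
  · have h2 : S.ν (-1) + S.ν (-1) < 0 := add_neg h1 h1
    rw [← h] at h2
    exact absurd h2 (lt_irrefl 0)
  · exact h1
  · have h2 : (0:Γ) < S.ν (-1) + S.ν (-1) := add_pos h1 h1
    rw [← h] at h2
    exact absurd h2 (lt_irrefl 0)

lemma zero_mem_integers : (0 : F) ∈ S.integers := Or.inl rfl

lemma neg_mem_integers {x : F} (hx : x ∈ S.integers) : -x ∈ S.integers := by
  rcases hx with h | h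
  · exact Or.inl (by rw [h, neg_zero])
  · rcases eq_or_ne x 0 with h0 | h0
    · exact Or.inl (by rw [h0, neg_zero])
    · refine Or.inr ?_
      have : S.ν (-1 * x) = S.ν (-1) + S.ν x := S.ν_mul _ _ (by norm_num) h0
      rw [neg_one_mul, nu_neg_one, zero_add] at this
      rw [this]; exact h

lemma add_mem_integers {x y : F} (hx : x ∈ S.integers) (hy : y ∈ S.integers) :
    x + y ∈ S.integers := by
  rcases eq_or_ne x 0 with h0 | h0
  · rw [h0, zero_add]; exact hy
  rcases eq_or_ne y 0 with h1 | h1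
  · rw [h1, add_zero]; exact hx
  rcases eq_or_ne (x + y) 0 with h2 | h2
  · exact Or.inl h2
  refine Or.inr ?_
  have hx' : 0 ≤ S.ν x := hx.resolve_left h0
  have hy' : 0 ≤ S.ν y := hy.resolve_left h1
  exact le_trans (le_min hx' hy') (S.ν_add x y h0 h1 h2)

lemma mul_mem_integers {x y : F} (hx : x ∈ S.integers) (hy : y ∈ S.integers) :
    x * y ∈ S.integers := by
  rcases eq_or_ne x 0 with h0 | h0
  · exact Or.inl (by rw [h0, zero_mul])
  rcases eq_or_ne y 0 with h1 | h1
  · exact Or.inl (by rw [h1, mul_zero])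
  refine Or.inr ?_
  rw [S.ν_mul x y h0 h1]
  exact add_nonneg (hx.resolve_left h0) (hy.resolve_left h1)

lemma t_mem_integers {δ : Γ} (h : 0 ≤ δ) : S.t δ ∈ S.integers :=
  Or.inr (by rw [S.ν_t]; exact h)

lemma self_mem_fracIdeal (a : F) (γ : Γ) : a ∈ S.fracIdeal a γ := by
  have : (a - a) * S.t (-γ) = 0 := by ring
  exact (Or.inl this : (a - a) * S.t (-γ) = 0 ∨ _)

lemma scale_mem {γ γ' : Γ} (h : γ ≤ γ') {a' z : F} (hz : z ∈ S.fracIdeal a' γ') :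
    (z - a') * S.t (-γ) ∈ S.integers := by
  have heq : (z - a') * S.t (-γ) = ((z - a') * S.t (-γ')) * S.t (γ' - γ) := by
    rw [mul_assoc, ← S.t_add]
    congr 2
    abel
  rw [heq]
  exact S.mul_mem_integers hz (S.t_mem_integers (sub_nonneg.mpr h))

lemma ball_trans {γ γ' : Γ} (h : γ ≤ γ') {a a' x y : F}
    (hx : x ∈ S.fracIdeal a γ) (hx' : x ∈ S.fracIdeal a' γ') (hy : y ∈ S.fracIdeal a' γ') :
    y ∈ S.fracIdeal a γ := by
  have h1 := S.scale_mem h hx'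
  have h2 := S.scale_mem h hy
  have heq : (y - a) * S.t (-γ) =
      (y - a') * S.t (-γ) + (-((x - a') * S.t (-γ))) + (x - a) * S.t (-γ) := by ring
  show (y - a) * S.t (-γ) ∈ S.integers
  rw [heq]
  exact S.add_mem_integers (S.add_mem_integers h2 (S.neg_mem_integers h1)) hx

lemma ball_symm {γ : Γ} {a a' : F} (h : a' ∈ S.fracIdeal a γ) : a ∈ S.fracIdeal a' γ := by
  have : (a - a') * S.t (-γ) = -((a' - a) * S.t (-γ)) := by ring
  show (a - a') * S.t (-γ) ∈ S.integers
  rw [this]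
  exact S.neg_mem_integers h

lemma ball_congr {γ : Γ} {a a' : F} (h : a' ∈ S.fracIdeal a γ) :
    S.fracIdeal a' γ = S.fracIdeal a γ := by
  ext y
  constructor
  · intro hy
    exact S.ball_trans le_rfl h (S.self_mem_fracIdeal a' γ) hy
  · intro hy
    exact S.ball_trans le_rfl (S.ball_symm h) (S.self_mem_fracIdeal a γ) hy

lemma residue_zero {γ γ' : Γ} (h : γ < γ') {a' x : F} (hx : x ∈ S.fracIdeal a' γ') :
    S.ρ ((x - a') * S.t (-γ)) = 0 := by
  have heq : (x - a') * S.t (-γ) = ((x - a') * S.t (-γ')) * S.t (γ' - γ) := by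
    rw [mul_assoc, ← S.t_add]
    congr 2
    abel
  have htO : S.t (γ' - γ) ∈ S.integers := S.t_mem_integers (sub_nonneg.mpr h.le)
  rw [heq, S.ρ_mul _ _ hx htO]
  have : S.ρ (S.t (γ' - γ)) = 0 :=
    (S.ρ_eq_zero _ htO).mpr (Or.inr (by rw [S.ν_t]; exact sub_pos.mpr h))
  rw [this, mul_zero]

lemma residue_split {γ : Γ} {a a' x : F} (hx : x ∈ S.fracIdeal a γ)
    (ha' : a' ∈ S.fracIdeal a γ) :
    S.ρ ((x - a) * S.t (-γ)) = S.ρ ((x - a') * S.t (-γ)) + S.ρ ((a' - a) * S.t (-γ)) := by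
  have h1 : (x - a') * S.t (-γ) ∈ S.integers := by
    have heq : (x - a') * S.t (-γ) = (x - a) * S.t (-γ) + (-((a' - a) * S.t (-γ))) := by ring
    rw [heq]
    exact S.add_mem_integers hx (S.neg_mem_integers ha')
  rw [← S.ρ_add _ _ h1 ha']
  congr 1
  ring

lemma lift_const_on {γ γ' : Γ} (h : γ < γ') {a a' x : F}
    (ha' : a' ∈ S.fracIdeal a γ) (hx : x ∈ S.fracIdeal a' γ') (f : k → ℂ) :
    S.lift f a γ x = f (S.ρ ((a' - a) * S.t (-γ))) := by
  have hxa : x ∈ S.fracIdeal a γ :=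
    S.ball_trans h.le ha' (S.self_mem_fracIdeal a' γ') hx
  rw [lift, Set.indicator_of_mem hxa]
  rw [S.residue_split hxa ha', S.residue_zero h hx, zero_add]

lemma lift_translate {γ : Γ} {a a' : F} (ha' : a' ∈ S.fracIdeal a γ) (f : k → ℂ) :
    S.lift f a' γ = S.lift (fun u => f (u + S.ρ ((a - a') * S.t (-γ)))) a γ := by
  funext x
  by_cases hx : x ∈ S.fracIdeal a γ
  · have hx' : x ∈ S.fracIdeal a' γ := by rw [S.ball_congr ha']; exact hx
    rw [lift, lift, Set.indicator_of_mem hx', Set.indicator_of_mem hx]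
    exact congrArg f (S.residue_split hx' (S.ball_symm ha'))
  · have hx' : x ∉ S.fracIdeal a' γ := by rw [S.ball_congr ha']; exact hx
    rw [lift, lift, Set.indicator_of_notMem hx', Set.indicator_of_notMem hx]

end LiftSetup
end Helpers

section Machinery

open LiftSetup

variable {Γ F k : Type*} [AddCommGroup Γ] [LinearOrder Γ] [IsOrderedAddMonoid Γ] [Field F] [Field k]
variable (S : LiftSetup Γ F k)

/-- Sum of a list of lifts. -/
def liftSum (L : List ((k → ℂ) × F × Γ)) : F → ℂ :=
  fun x => (L.map fun p => S.lift p.1 p.2.1 p.2.2 x).sum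

lemma liftSum_nil (x : F) : liftSum S ([] : List ((k → ℂ) × F × Γ)) x = 0 := rfl

lemma liftSum_cons (p : (k → ℂ) × F × Γ) (L : List ((k → ℂ) × F × Γ)) (x : F) :
    liftSum S (p :: L) x = S.lift p.1 p.2.1 p.2.2 x + liftSum S L x := rfl

lemma liftSum_append (L1 L2 : List ((k → ℂ) × F × Γ)) (x : F) :
    liftSum S (L1 ++ L2) x = liftSum S L1 x + liftSum S L2 x := by
  simp [liftSum]

lemma liftSum_perm {L L' : List ((k → ℂ) × F × Γ)} (h : L.Perm L') :
    liftSum S L = liftSum S L' :=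
  funext fun x => (h.map _).sum_eq

lemma liftSum_vanish {L : List ((k → ℂ) × F × Γ)} {x : F}
    (h : ∀ p ∈ L, x ∉ S.fracIdeal p.2.1 p.2.2) : liftSum S L x = 0 := by
  refine List.sum_eq_zero ?_
  intro y hy
  obtain ⟨p, hp, rfl⟩ := List.mem_map.mp hy
  exact Set.indicator_of_notMem (h p hp) _

/-- Two (center, scale) data describe the same ball. -/
def SB (b b' : F × Γ) : Prop := b.2 = b'.2 ∧ b.1 ∈ S.fracIdeal b'.1 b'.2

lemma SB_symm {b b' : F × Γ} (h : SB S b b') : SB S b' b := by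
  obtain ⟨h1, h2⟩ := h
  refine ⟨h1.symm, ?_⟩
  rw [h1]
  exact S.ball_symm h2

/-- The elementary increment function. -/
def Phi (C z : ℂ) : ℂ := ((‖C + z‖ - ‖C‖ : ℝ) : ℂ)

lemma Phi_zero (C : ℂ) : Phi C 0 = 0 := by simp [Phi]

lemma Phi_split (C c w : ℂ) : Phi C (c + w) = Phi C c + Phi (C + c) w := by
  simp only [Phi, ← add_assoc]
  push_cast
  ring

section Meas

variable [TopologicalSpace k] [IsTopologicalRing k] [MeasurableSpace k] [BorelSpace k]
variable (μ : Measure k)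

lemma integrable_translate [μ.IsAddHaarMeasure] {f : k → ℂ}
    (hf : Integrable f μ) (d : k) : Integrable (fun u => f (u + d)) μ := by
  simpa [add_comm] using hf.comp_add_left d

lemma integrable_phi {f : k → ℂ} (hf : Integrable f μ) (C : ℂ) :
    Integrable (fun u => Phi C (f u)) μ := by
  have hg : Continuous fun z : ℂ => Phi C z := by
    unfold Phi
    exact Complex.continuous_ofReal.comp
      ((continuous_norm.comp (continuous_const.add continuous_id)).sub continuous_const)
  refine Integrable.mono hf (hg.comp_aestronglyMeasurable hf.1) ?_
  refine Filter.Eventually.of_forall fun u => ?_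
  have h1 : ‖Phi C (f u)‖ = |‖C + f u‖ - ‖C‖| := by
    rw [Phi, Complex.norm_real, Real.norm_eq_abs]
  rw [h1]
  have h2 := abs_norm_sub_norm_le (C + f u) (C)
  rw [add_sub_cancel_left] at h2
  simpa using h2

lemma lift_add_fun (f g : k → ℂ) (a : F) (γ : Γ) :
    S.lift (fun u => f u + g u) a γ = fun x => S.lift f a γ x + S.lift g a γ x := by
  funext x
  by_cases hx : x ∈ S.fracIdeal a γ <;>
    simp [LiftSetup.lift, Set.indicator_of_mem, Set.indicator_of_notMem, hx]

lemma lift_smul_fun (c : ℂ) (f : k → ℂ) (a : F) (γ : Γ) :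
    S.lift (fun u => c * f u) a γ = fun x => c * S.lift f a γ x := by
  funext x
  by_cases hx : x ∈ S.fracIdeal a γ <;>
    simp [LiftSetup.lift, Set.indicator_of_mem, Set.indicator_of_notMem, hx]

lemma insert_lift [μ.IsAddHaarMeasure] (p : (k → ℂ) × F × Γ) (hp : Integrable p.1 μ) :
    ∀ (M : List ((k → ℂ) × F × Γ)), (∀ q ∈ M, Integrable q.1 μ) →
      M.Pairwise (fun a b => ¬ SB S a.2 b.2) →
      ∃ M' : List ((k → ℂ) × F × Γ),
        (∀ q ∈ M', Integrable q.1 μ) ∧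
        M'.Pairwise (fun a b => ¬ SB S a.2 b.2) ∧
        (∀ x, liftSum S M' x = S.lift p.1 p.2.1 p.2.2 x + liftSum S M x) ∧
        (∀ q' ∈ M', q'.2 = p.2 ∨ ∃ q ∈ M, q'.2 = q.2) := by
  intro M
  induction M with
  | nil =>
    intro _ _
    refine ⟨[p], ?_, List.pairwise_singleton _ _, ?_, ?_⟩
    · intro q hq
      rw [List.mem_singleton.mp hq]
      exact hp
    · intro x
      simp [liftSum_cons, liftSum_nil]
    · intro q' hq'
      exact Or.inl (by rw [List.mem_singleton.mp hq'])
  | cons q M₀ ih =>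
    intro hMint hMpw
    obtain ⟨hq_head, hM₀pw⟩ := List.pairwise_cons.mp hMpw
    have hqint : Integrable q.1 μ := hMint q (List.mem_cons_self)
    have hM₀int : ∀ r ∈ M₀, Integrable r.1 μ := fun r hr => hMint r (List.mem_cons_of_mem _ hr)
    by_cases hsb : SB S p.2 q.2
    · -- merge p into q
      set d : k := S.ρ ((q.2.1 - p.2.1) * S.t (-q.2.2)) with hd
      set m : (k → ℂ) × F × Γ := (fun u => q.1 u + p.1 (u + d), q.2) with hm
      refine ⟨m :: M₀, ?_, ?_, ?_, ?_⟩
      · intro r hr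
        rcases List.mem_cons.mp hr with rfl | hr
        · exact hqint.add (integrable_translate μ hp d)
        · exact hM₀int r hr
      · exact List.pairwise_cons.mpr ⟨fun r hr => hq_head r hr, hM₀pw⟩
      · intro x
        rw [liftSum_cons, liftSum_cons]
        have hlift : S.lift m.1 m.2.1 m.2.2 x =
            S.lift q.1 q.2.1 q.2.2 x + S.lift p.1 p.2.1 p.2.2 x := by
          have htr : S.lift p.1 p.2.1 p.2.2 = S.lift (fun u => p.1 (u + d)) q.2.1 q.2.2 := by
            have h22 : p.2.2 = q.2.2 := hsb.1
            have hmem : p.2.1 ∈ S.fracIdeal q.2.1 q.2.2 := hsb.2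
            calc S.lift p.1 p.2.1 p.2.2 = S.lift p.1 p.2.1 q.2.2 := by rw [h22]
              _ = S.lift (fun u => p.1 (u + d)) q.2.1 q.2.2 := S.lift_translate hmem p.1
          rw [htr]
          show S.lift (fun u => q.1 u + p.1 (u + d)) q.2.1 q.2.2 x = _
          rw [lift_add_fun]
        rw [hlift]
        ring
      · intro q' hq'
        rcases List.mem_cons.mp hq' with rfl | hq'
        · exact Or.inr ⟨q, List.mem_cons_self, rfl⟩
        · exact Or.inr ⟨q', List.mem_cons_of_mem _ hq', rfl⟩
    · obtain ⟨M₀', hint', hpw', hsum', htrack'⟩ := ih hM₀int hM₀pw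
      refine ⟨q :: M₀', ?_, ?_, ?_, ?_⟩
      · intro r hr
        rcases List.mem_cons.mp hr with rfl | hr
        · exact hqint
        · exact hint' r hr
      · refine List.pairwise_cons.mpr ⟨?_, hpw'⟩
        intro r hr
        rcases htrack' r hr with h2 | ⟨q₀, hq₀, h2⟩
        · rw [h2]
          intro hcon
          exact hsb (SB_symm S hcon)
        · rw [h2]
          exact hq_head q₀ hq₀
      · intro x
        rw [liftSum_cons, liftSum_cons, hsum' x]
        ring
      · intro q' hq'
        rcases List.mem_cons.mp hq' with rfl | hq'
        · exact Or.inr ⟨q', List.mem_cons_self, rfl⟩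
        · rcases htrack' q' hq' with h2 | ⟨q₀, hq₀, h2⟩
          · exact Or.inl h2
          · exact Or.inr ⟨q₀, List.mem_cons_of_mem _ hq₀, h2⟩

lemma normalizeLifts [μ.IsAddHaarMeasure] :
    ∀ (L : List ((k → ℂ) × F × Γ)), (∀ p ∈ L, Integrable p.1 μ) →
      ∃ M : List ((k → ℂ) × F × Γ),
        (∀ q ∈ M, Integrable q.1 μ) ∧
        M.Pairwise (fun a b => ¬ SB S a.2 b.2) ∧
        (∀ x, liftSum S M x = liftSum S L x) := by
  intro L
  induction L with
  | nil =>
    intro _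
    exact ⟨[], by simp, List.Pairwise.nil, fun x => rfl⟩
  | cons p L₀ ih =>
    intro hint
    obtain ⟨M₀, hM₀int, hM₀pw, hM₀sum⟩ := ih (fun r hr => hint r (List.mem_cons_of_mem _ hr))
    obtain ⟨M', hint', hpw', hsum', _⟩ :=
      insert_lift S μ p (hint p (List.mem_cons_self)) M₀ hM₀int hM₀pw
    refine ⟨M', hint', hpw', fun x => ?_⟩
    rw [hsum' x, liftSum_cons, hM₀sum x]

end Meas

lemma exists_min_gamma :
    ∀ (L : List ((k → ℂ) × F × Γ)), L ≠ [] → ∃ p ∈ L, ∀ q ∈ L, p.2.2 ≤ q.2.2 := by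
  intro L
  induction L with
  | nil => intro h; exact absurd rfl h
  | cons p T ih =>
    intro _
    rcases eq_or_ne T [] with rfl | hT
    · exact ⟨p, List.mem_cons_self, fun q hq => by
        rw [List.mem_singleton.mp hq]⟩
    · obtain ⟨m, hm, hmin⟩ := ih hT
      by_cases hpm : p.2.2 ≤ m.2.2
      · refine ⟨p, List.mem_cons_self, fun q hq => ?_⟩
        rcases List.mem_cons.mp hq with rfl | hq
        · exact le_rfl
        · exact le_trans hpm (hmin q hq)
      · refine ⟨m, List.mem_cons_of_mem _ hm, fun q hq => ?_⟩
        rcases List.mem_cons.mp hq with rfl | hq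
        · exact le_of_not_ge hpm
        · exact hmin q hq

end Machinery

section Master

open LiftSetup

variable {Γ F k : Type*} [AddCommGroup Γ] [LinearOrder Γ] [IsOrderedAddMonoid Γ] [Field F] [Field k]
variable [TopologicalSpace k] [IsTopologicalRing k] [MeasurableSpace k] [BorelSpace k]
variable (S : LiftSetup Γ F k)

lemma master (μ : Measure k) [μ.IsAddHaarMeasure] :
    ∀ (n : ℕ) (L : List ((k → ℂ) × F × Γ)), L.length ≤ n →
      (∀ p ∈ L, Integrable p.1 μ) →
      L.Pairwise (fun a b => ¬ SB S a.2 b.2) →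
      ∀ C : ℂ,
      (fun x => Phi C (liftSum S L x)) ∈ Submodule.span ℂ
        {g : F → ℂ | ∃ (f₀ : k → ℂ) (a : F) (γ : Γ), Integrable f₀ μ ∧ g = S.lift f₀ a γ} := by
  intro n
  induction n with
  | zero =>
    intro L hL _ _ C
    have hLnil : L = [] := List.length_eq_zero_iff.mp (Nat.le_zero.mp hL)
    subst hLnil
    have he : (fun x => Phi C (liftSum S ([] : List ((k → ℂ) × F × Γ)) x)) = (0 : F → ℂ) := by
      funext x
      rw [liftSum_nil, Phi_zero]
      rfl
    rw [he]
    exact zero_mem _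
  | succ n ih =>
    intro L hL hInt hPW C
    rcases eq_or_ne L [] with rfl | hne
    · have he : (fun x => Phi C (liftSum S ([] : List ((k → ℂ) × F × Γ)) x)) = (0 : F → ℂ) := by
        funext x
        rw [liftSum_nil, Phi_zero]
        rfl
      rw [he]
      exact zero_mem _
    classical
    obtain ⟨p, hpL, hpmin⟩ := exists_min_gamma L hne
    obtain ⟨T, hperm⟩ : ∃ T, L.Perm (p :: T) := ⟨_, List.perm_cons_erase hpL⟩
    have hsymm : Symmetric (fun a b : (k → ℂ) × F × Γ => ¬ SB S a.2 b.2) :=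
      fun a b hab hba => hab (SB_symm S hba)
    have hPW' : (p :: T).Pairwise (fun a b => ¬ SB S a.2 b.2) :=
      (hperm.pairwise_iff (fun hab hba => hab (SB_symm S hba))).mp hPW
    have hTpw : T.Pairwise (fun a b => ¬ SB S a.2 b.2) := (List.pairwise_cons.mp hPW').2
    have hphead : ∀ q ∈ T, ¬ SB S p.2 q.2 := (List.pairwise_cons.mp hPW').1
    have hTmem : ∀ q ∈ T, q ∈ L := fun q hq => hperm.symm.subset (List.mem_cons_of_mem p hq)
    have hlsum : liftSum S L = liftSum S (p :: T) := liftSum_perm S hperm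
    have hLenL : L.length = T.length + 1 := by
      rw [hperm.length_eq]
      rfl
    have hTlen : T.length ≤ n := by omega
    have hpInt : Integrable p.1 μ := hInt p hpL
    have hmin' : ∀ q ∈ T, p.2.2 ≤ q.2.2 := fun q hq => hpmin q (hTmem q hq)
    set inb : (k → ℂ) × F × Γ → Bool := fun q => decide (q.2.1 ∈ S.fracIdeal p.2.1 p.2.2)
      with hinb
    set IN := T.filter inb with hIN
    set OUT := T.filter (fun q => !inb q) with hOUT
    have hsplitperm : (IN ++ OUT).Perm T := List.filter_append_perm inb T
    have hin_mem : ∀ q ∈ IN, q ∈ T ∧ q.2.1 ∈ S.fracIdeal p.2.1 p.2.2 := by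
      intro q hq
      obtain ⟨h1, h2⟩ := List.mem_filter.mp hq
      exact ⟨h1, of_decide_eq_true h2⟩
    have hout_mem : ∀ q ∈ OUT, q ∈ T ∧ q.2.1 ∉ S.fracIdeal p.2.1 p.2.2 := by
      intro q hq
      obtain ⟨h1, h2⟩ := List.mem_filter.mp hq
      simp only [hinb, Bool.not_eq_true', decide_eq_false_iff_not] at h2
      exact ⟨h1, h2⟩
    have hball_in : ∀ q ∈ IN, ∀ x, x ∈ S.fracIdeal q.2.1 q.2.2 → x ∈ S.fracIdeal p.2.1 p.2.2 := by
      intro q hq x hx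
      obtain ⟨hqT, hq2⟩ := hin_mem q hq
      exact S.ball_trans (hmin' q hqT) hq2 (S.self_mem_fracIdeal _ _) hx
    have hball_out : ∀ q ∈ OUT, ∀ x, x ∈ S.fracIdeal p.2.1 p.2.2 →
        x ∉ S.fracIdeal q.2.1 q.2.2 := by
      intro q hq x hxp hxq
      obtain ⟨hqT, hq2⟩ := hout_mem q hq
      exact hq2 (S.ball_trans (hmin' q hqT) hxp hxq (S.self_mem_fracIdeal _ _))
    by_cases hOUTne : OUT = []
    · -- all remaining balls sit inside the ball of p
      have hTin : ∀ q ∈ T, q.2.1 ∈ S.fracIdeal p.2.1 p.2.2 := by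
        intro q hq
        by_contra hc
        have hmem : q ∈ OUT := List.mem_filter.mpr ⟨hq, by simp [hinb, hc]⟩
        rw [hOUTne] at hmem
        exact absurd hmem (List.not_mem_nil)
      rcases eq_or_ne T [] with rfl | hTne
      · -- a single lift
        have hval : (fun x => Phi C (liftSum S L x)) =
            S.lift (fun u => Phi C (p.1 u)) p.2.1 p.2.2 := by
          funext x
          rw [hlsum, liftSum_cons, liftSum_nil, add_zero]
          by_cases hx : x ∈ S.fracIdeal p.2.1 p.2.2
          · rw [LiftSetup.lift, LiftSetup.lift, Set.indicator_of_mem hx, Set.indicator_of_mem hx]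
          · rw [LiftSetup.lift, LiftSetup.lift, Set.indicator_of_notMem hx,
              Set.indicator_of_notMem hx, Phi_zero]
        rw [hval]
        exact Submodule.subset_span ⟨_, _, _, integrable_phi μ hpInt C, rfl⟩
      · -- peel off a minimal strictly smaller ball
        obtain ⟨p', hp'T, hp'min⟩ := exists_min_gamma T hTne
        have hpp' : p.2.2 < p'.2.2 := by
          rcases lt_or_eq_of_le (hmin' p' hp'T) with h | h
          · exact h
          · exfalso
            exact (hphead p' hp'T) (SB_symm S ⟨h.symm, hTin p' hp'T⟩)
        obtain ⟨T', hperm2⟩ : ∃ T', T.Perm (p' :: T') := ⟨_, List.perm_cons_erase hp'T⟩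
        have hT'mem : ∀ q ∈ T', q ∈ T := fun q hq =>
          hperm2.symm.subset (List.mem_cons_of_mem _ hq)
        have hT'pw : (p' :: T').Pairwise (fun a b => ¬ SB S a.2 b.2) :=
          (hperm2.pairwise_iff (fun hab hba => hab (SB_symm S hba))).mp hTpw
        set inb2 : (k → ℂ) × F × Γ → Bool :=
          fun q => decide (q.2.1 ∈ S.fracIdeal p'.2.1 p'.2.2) with hinb2
        set G := T'.filter inb2 with hGdef
        set RR := T'.filter (fun q => !inb2 q) with hRRdef
        have hsplit2 : (G ++ RR).Perm T' := List.filter_append_perm inb2 T'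
        have hmin2 : ∀ q ∈ T', p'.2.2 ≤ q.2.2 := fun q hq => hp'min q (hT'mem q hq)
        have hball_G : ∀ q ∈ G, ∀ x, x ∈ S.fracIdeal q.2.1 q.2.2 →
            x ∈ S.fracIdeal p'.2.1 p'.2.2 := by
          intro q hq x hx
          obtain ⟨h1, h2⟩ := List.mem_filter.mp hq
          exact S.ball_trans (hmin2 q h1) (of_decide_eq_true h2)
            (S.self_mem_fracIdeal _ _) hx
        have hball_R : ∀ q ∈ RR, ∀ x, x ∈ S.fracIdeal p'.2.1 p'.2.2 →
            x ∉ S.fracIdeal q.2.1 q.2.2 := by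
          intro q hq x hxp hxq
          obtain ⟨h1, h2⟩ := List.mem_filter.mp hq
          simp only [hinb2, Bool.not_eq_true', decide_eq_false_iff_not] at h2
          exact h2 (S.ball_trans (hmin2 q h1) hxp hxq (S.self_mem_fracIdeal _ _))
        set c : ℂ := p.1 (S.ρ ((p'.2.1 - p.2.1) * S.t (-p.2.2))) with hc
        have hconst : ∀ x ∈ S.fracIdeal p'.2.1 p'.2.2, S.lift p.1 p.2.1 p.2.2 x = c :=
          fun x hx => S.lift_const_on hpp' (hTin p' hp'T) hx p.1
        have hdecomp : (fun x => Phi C (liftSum S L x)) =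
            (fun x => Phi C (liftSum S (p :: RR) x)) +
              (fun x => Phi (C + c) (liftSum S (p' :: G) x)) := by
          funext x
          have hLx : liftSum S L x =
              S.lift p.1 p.2.1 p.2.2 x + (liftSum S (p' :: G) x + liftSum S RR x) := by
            rw [hlsum, liftSum_cons]
            congr 1
            rw [liftSum_perm S hperm2, liftSum_cons, ← liftSum_perm S hsplit2,
              liftSum_append, liftSum_cons]
            ring
          simp only [Pi.add_apply]
          by_cases hx : x ∈ S.fracIdeal p'.2.1 p'.2.2
          · have hR0 : liftSum S RR x = 0 :=
              liftSum_vanish S (fun q hq => hball_R q hq x hx)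
            have hpc : S.lift p.1 p.2.1 p.2.2 x = c := hconst x hx
            simp only [hLx, hR0, hpc, liftSum_cons, add_zero]
            exact Phi_split C c _
          · have hp'0 : S.lift p'.1 p'.2.1 p'.2.2 x = 0 := Set.indicator_of_notMem hx _
            have hG0 : liftSum S G x = 0 :=
              liftSum_vanish S (fun q hq hxq => hx (hball_G q hq x hxq))
            simp only [hLx, hp'0, hG0, liftSum_cons, add_zero, zero_add, Phi_zero]
        rw [hdecomp]
        have hlenT' : T.length = T'.length + 1 := by
          rw [hperm2.length_eq]
          rfl
        refine add_mem ?_ ?_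
        · -- p together with the balls disjoint from that of p'
          have hsubR : RR.Sublist T' := List.filter_sublist (l := T')
          have hsubR2 : (p :: RR).Sublist (p :: p' :: T') := by
            refine List.Sublist.cons₂ p ?_
            exact hsubR.trans (List.sublist_cons_self p' T')
          have hPWcons : (p :: p' :: T').Pairwise (fun a b => ¬ SB S a.2 b.2) := by
            refine List.pairwise_cons.mpr ⟨?_, hT'pw⟩
            intro q hq
            exact hphead q (hperm2.symm.subset hq)
          refine ih (p :: RR) ?_ ?_ ?_ C
          · have : RR.length ≤ T'.length := hsubR.length_le
            simp only [List.length_cons]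
            omega
          · intro q hq
            rcases List.mem_cons.mp hq with rfl | hq
            · exact hpInt
            · exact hInt q (hTmem q (hT'mem q (hsubR.subset hq)))
          · exact hPWcons.sublist hsubR2
        · -- p' together with the balls inside that of p'
          have hsubG : G.Sublist T' := List.filter_sublist (l := T')
          have hsubG2 : (p' :: G).Sublist (p' :: T') := List.Sublist.cons₂ p' hsubG
          refine ih (p' :: G) ?_ ?_ ?_ (C + c)
          · have : G.length ≤ T'.length := hsubG.length_le
            simp only [List.length_cons]
            omega
          · intro q hq
            rcases List.mem_cons.mp hq with rfl | hq
            · exact hInt _ (hTmem _ hp'T)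
            · exact hInt q (hTmem q (hT'mem q (hsubG.subset hq)))
          · exact hT'pw.sublist hsubG2
    · -- OUT nonempty : split off the balls disjoint from that of p
      have hdecomp : (fun x => Phi C (liftSum S L x)) =
          (fun x => Phi C (liftSum S (p :: IN) x)) + (fun x => Phi C (liftSum S OUT x)) := by
        funext x
        have hLx : liftSum S L x =
            (S.lift p.1 p.2.1 p.2.2 x + liftSum S IN x) + liftSum S OUT x := by
          rw [hlsum, liftSum_cons, ← liftSum_perm S hsplitperm, liftSum_append]
          ring
        simp only [Pi.add_apply]
        by_cases hx : x ∈ S.fracIdeal p.2.1 p.2.2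
        · have hO0 : liftSum S OUT x = 0 :=
            liftSum_vanish S (fun q hq => hball_out q hq x hx)
          simp only [hLx, hO0, liftSum_cons, add_zero, Phi_zero]
        · have hp0 : S.lift p.1 p.2.1 p.2.2 x = 0 := Set.indicator_of_notMem hx _
          have hI0 : liftSum S IN x = 0 :=
            liftSum_vanish S (fun q hq hxq => hx (hball_in q hq x hxq))
          simp only [hLx, hp0, hI0, liftSum_cons, add_zero, zero_add, Phi_zero]
      rw [hdecomp]
      have hOUTpos : 0 < OUT.length := List.length_pos_iff.mpr hOUTne
      have hINlen : IN.length + OUT.length = T.length := by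
        have := hsplitperm.length_eq
        simpa [List.length_append] using this
      refine add_mem ?_ ?_
      · have hsubIN : (p :: IN).Sublist (p :: T) :=
          List.Sublist.cons₂ p (List.filter_sublist (l := T))
        refine ih (p :: IN) ?_ ?_ ?_ C
        · simp only [List.length_cons]
          omega
        · intro q hq
          rcases List.mem_cons.mp hq with rfl | hq
          · exact hpInt
          · exact hInt q (hTmem q ((List.filter_sublist (l := T)).subset hq))
        · exact hPW'.sublist hsubIN
      · refine ih OUT ?_ ?_ ?_ C
        · omega
        · intro q hq
          exact hInt q (hTmem q ((List.filter_sublist (l := T)).subset hq))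
        · exact hTpw.sublist (List.filter_sublist (l := T))

end Master

/-- If `f` belongs to `𝓛(F)_ℂ` (the complex span of the lifts of
Haar-integrable functions on the local field `k`), then so does `x ↦ |f(x)|`. -/
theorem statement1
    {Γ F k : Type*} [AddCommGroup Γ] [LinearOrder Γ] [IsOrderedAddMonoid Γ] [Field F] [Field k]
    [TopologicalSpace k] [IsTopologicalRing k] [LocallyCompactSpace k]
    [MeasurableSpace k] [BorelSpace k]
    (hk_nondiscrete : ¬ IsOpen ({0} : Set k))
    (μ : Measure k) [μ.IsAddHaarMeasure]
    (S : LiftSetup Γ F k)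
    (f : F → ℂ)
    (hf : f ∈ Submodule.span ℂ
      {g : F → ℂ | ∃ (f₀ : k → ℂ) (a : F) (γ : Γ), Integrable f₀ μ ∧ g = S.lift f₀ a γ}) :
    (fun x => ((‖f x‖ : ℝ) : ℂ)) ∈ Submodule.span ℂ
      {g : F → ℂ | ∃ (f₀ : k → ℂ) (a : F) (γ : Γ), Integrable f₀ μ ∧ g = S.lift f₀ a γ} := by
  classical
  -- Step 1: represent `f` as a finite sum of lifts of integrable functions.
  have hrep : ∃ L : List ((k → ℂ) × F × Γ),
      (∀ p ∈ L, Integrable p.1 μ) ∧ ∀ x, f x = liftSum S L x := by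
    refine Submodule.span_induction
      (p := fun g _ => ∃ L : List ((k → ℂ) × F × Γ),
        (∀ p ∈ L, Integrable p.1 μ) ∧ ∀ x, g x = liftSum S L x) ?_ ?_ ?_ ?_ hf
    · rintro g ⟨f₀, a, γ, hint, rfl⟩
      refine ⟨[(f₀, a, γ)], ?_, fun x => ?_⟩
      · intro p hp
        rw [List.mem_singleton.mp hp]
        exact hint
      · rw [liftSum_cons, liftSum_nil, add_zero]
    · exact ⟨[], by simp, fun x => rfl⟩
    · rintro g₁ g₂ _ _ ⟨L₁, hL₁, he₁⟩ ⟨L₂, hL₂, he₂⟩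
      refine ⟨L₁ ++ L₂, ?_, fun x => ?_⟩
      · intro p hp
        rcases List.mem_append.mp hp with h | h
        · exact hL₁ p h
        · exact hL₂ p h
      · rw [liftSum_append, Pi.add_apply, he₁ x, he₂ x]
    · rintro a g _ ⟨L, hL, he⟩
      refine ⟨L.map (fun p => (fun u => a * p.1 u, p.2)), ?_, fun x => ?_⟩
      · intro p hp
        obtain ⟨q, hq, rfl⟩ := List.mem_map.mp hp
        exact (hL q hq).const_mul a
      · rw [Pi.smul_apply, he x, smul_eq_mul]
        clear he
        induction L with
        | nil => simp [liftSum_nil]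
        | cons q L₀ ihq =>
          have hmap : (q :: L₀).map (fun p => ((fun u => a * p.1 u : k → ℂ), p.2)) =
              ((fun u => a * q.1 u : k → ℂ), q.2) ::
                L₀.map (fun p => ((fun u => a * p.1 u : k → ℂ), p.2)) := rfl
          rw [hmap, liftSum_cons, liftSum_cons, mul_add,
            ← ihq (fun p hp => hL p (List.mem_cons_of_mem _ hp))]
          congr 1
          show a * S.lift q.1 q.2.1 q.2.2 x = S.lift (fun u => a * q.1 u) q.2.1 q.2.2 x
          rw [lift_smul_fun]
  obtain ⟨L, hLint, hLeq⟩ := hrep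
  -- Step 2: merge lifts supported on a common ball.
  obtain ⟨M, hMint, hMpw, hMeq⟩ := normalizeLifts S μ L hLint
  -- Step 3: apply the main combinatorial lemma.
  have hmain := master S μ M.length M le_rfl hMint hMpw 0
  have hfinal : (fun x => ((‖f x‖ : ℝ) : ℂ)) = fun x => Phi 0 (liftSum S M x) := by
    funext x
    rw [hMeq x, ← hLeq x, Phi]
    simp
  rw [hfinal]
  exact hmain
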